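/- Let h(x,y) be a real polynomial in two variables and consider the Hamiltonian vector field φ = (φ₁, φ₂) with φ₁ = ∂h/∂y and φ₂ = −∂h/∂x. Then φ satisfies the Hárs–Tóth realizability condition (every monomial of φ₁ with negative coefficient is divisible by x, and every monomial of φ₂ with negative coefficient is divisible by y) if and only if h can be written as h(x,y) = xy·a(x,y) − b(x) + c(y) where b and c are polynomials with nonnegative coefficients; equivalently, if and only if the coefficient of xⁱ in h is nonpositive for every i ≥ 1 and the coefficient of yʲ in h is nonnegative for every j ≥ 1. -/

import Mathlib

open MvPolynomial

private lemma fin2_eq_single1 (d : Fin 2 →₀ ℕ) (h : d 0 = 0) :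
    d = Finsupp.single 1 (d 1) := by
  ext j
  fin_cases j <;> simp [h, Finsupp.single_apply]

private lemma fin2_eq_single0 (d : Fin 2 →₀ ℕ) (h : d 1 = 0) :
    d = Finsupp.single 0 (d 0) := by
  ext j
  fin_cases j <;> simp [h, Finsupp.single_apply]

private lemma coeff_pderiv' (i : Fin 2) (p : MvPolynomial (Fin 2) ℝ) (d : Fin 2 →₀ ℕ) :
    (pderiv i p).coeff d = ((d i : ℝ) + 1) * p.coeff (d + Finsupp.single i 1) := by
  induction p using MvPolynomial.induction_on' with
  | monomial s a =>
    rw [pderiv_monomial]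
    by_cases hs : s = d + Finsupp.single i 1
    · subst hs
      rw [coeff_monomial, coeff_monomial, if_pos rfl, if_pos (by
        simp [add_tsub_cancel_right])]
      rw [Finsupp.add_apply, Finsupp.single_eq_same]
      push_cast
      ring
    · rw [coeff_monomial, coeff_monomial, if_neg hs, mul_zero]
      by_cases hsi : s i = 0
      · split
        · simp [hsi]
        · rfl
      · rw [if_neg]
        intro hd
        apply hs
        have h1 : Finsupp.single i 1 ≤ s := by
          rw [Finsupp.single_le_iff]
          omega
        rw [← hd, tsub_add_cancel_of_le h1]
  | add p q hp hq =>
    simp [hp, hq, mul_add]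

private lemma coeff_filter_sum (h : MvPolynomial (Fin 2) ℝ)
    (P : (Fin 2 →₀ ℕ) → Prop) [DecidablePred P] (f : (Fin 2 →₀ ℕ) → ℝ) (d : Fin 2 →₀ ℕ) :
    (∑ e ∈ h.support.filter P, monomial e (f e)).coeff d =
      if d ∈ h.support.filter P then f d else 0 := by
  rw [coeff_sum]
  simp_rw [coeff_monomial]
  exact Finset.sum_ite_eq' _ _ _

theorem hamiltonian_mass_action_realizability
    (h : MvPolynomial (Fin 2) ℝ) :
    (((∀ d : Fin 2 →₀ ℕ, (pderiv (1 : Fin 2) h).coeff d < 0 → 1 ≤ d 0) ∧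
      (∀ d : Fin 2 →₀ ℕ, (-(pderiv (0 : Fin 2) h)).coeff d < 0 → 1 ≤ d 1)) ↔
     (∃ a b c : MvPolynomial (Fin 2) ℝ,
        (∀ d : Fin 2 →₀ ℕ, 0 ≤ b.coeff d) ∧ (∀ d : Fin 2 →₀ ℕ, 0 ≤ c.coeff d) ∧
        (∀ d ∈ b.support, d 1 = 0) ∧ (∀ d ∈ c.support, d 0 = 0) ∧
        h = X 0 * X 1 * a - b + c)) ∧
    (((∀ d : Fin 2 →₀ ℕ, (pderiv (1 : Fin 2) h).coeff d < 0 → 1 ≤ d 0) ∧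
      (∀ d : Fin 2 →₀ ℕ, (-(pderiv (0 : Fin 2) h)).coeff d < 0 → 1 ≤ d 1)) ↔
     ((∀ i : ℕ, 1 ≤ i → h.coeff (Finsupp.single 0 i) ≤ 0) ∧
      (∀ j : ℕ, 1 ≤ j → 0 ≤ h.coeff (Finsupp.single 1 j)))) := by
  classical
  -- Key equivalence : Hárs–Tóth condition ↔ coefficient condition
  have key : ((∀ d : Fin 2 →₀ ℕ, (pderiv (1 : Fin 2) h).coeff d < 0 → 1 ≤ d 0) ∧
      (∀ d : Fin 2 →₀ ℕ, (-(pderiv (0 : Fin 2) h)).coeff d < 0 → 1 ≤ d 1)) ↔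
     ((∀ i : ℕ, 1 ≤ i → h.coeff (Finsupp.single 0 i) ≤ 0) ∧
      (∀ j : ℕ, 1 ≤ j → 0 ≤ h.coeff (Finsupp.single 1 j))) := by
    constructor
    · rintro ⟨h1, h2⟩
      constructor
      · intro i hi
        by_contra hpos
        push_neg at hpos
        set d : Fin 2 →₀ ℕ := Finsupp.single 0 (i - 1) with hd
        have hadd : d + Finsupp.single (0 : Fin 2) 1 = Finsupp.single 0 i := by
          rw [hd, ← Finsupp.single_add]
          congr 1
          omega
        have hcoeff : (-(pderiv (0 : Fin 2) h)).coeff d < 0 := by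
          rw [coeff_neg, coeff_pderiv', hadd]
          have : (0 : ℝ) < (d 0 : ℝ) + 1 := by positivity
          nlinarith
        have := h2 d hcoeff
        simp [hd, Finsupp.single_apply] at this
      · intro j hj
        by_contra hneg
        push_neg at hneg
        set d : Fin 2 →₀ ℕ := Finsupp.single 1 (j - 1) with hd
        have hadd : d + Finsupp.single (1 : Fin 2) 1 = Finsupp.single 1 j := by
          rw [hd, ← Finsupp.single_add]
          congr 1
          omega
        have hcoeff : (pderiv (1 : Fin 2) h).coeff d < 0 := by
          rw [coeff_pderiv', hadd]
          have : (0 : ℝ) < (d 1 : ℝ) + 1 := by positivity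
          nlinarith
        have := h1 d hcoeff
        simp [hd, Finsupp.single_apply] at this
    · rintro ⟨c1, c2⟩
      constructor
      · intro d hd
        by_contra hd0
        push_neg at hd0
        have hd0' : d 0 = 0 := by omega
        rw [coeff_pderiv'] at hd
        have hpos : (0 : ℝ) < (d 1 : ℝ) + 1 := by positivity
        have hneg : h.coeff (d + Finsupp.single 1 1) < 0 := by nlinarith
        set e : Fin 2 →₀ ℕ := d + Finsupp.single 1 1 with he
        have he0 : e 0 = 0 := by
          rw [he, Finsupp.add_apply, hd0', Finsupp.single_apply]
          simp
        have he1 : 1 ≤ e 1 := by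
          rw [he, Finsupp.add_apply, Finsupp.single_eq_same]
          omega
        have := c2 (e 1) he1
        rw [← fin2_eq_single1 _ he0] at this
        linarith
      · intro d hd
        by_contra hd1
        push_neg at hd1
        have hd1' : d 1 = 0 := by omega
        rw [coeff_neg, coeff_pderiv'] at hd
        have hpos : (0 : ℝ) < (d 0 : ℝ) + 1 := by positivity
        have hneg : 0 < h.coeff (d + Finsupp.single 0 1) := by nlinarith
        set e : Fin 2 →₀ ℕ := d + Finsupp.single 0 1 with he
        have he1' : e 1 = 0 := by
          rw [he, Finsupp.add_apply, hd1', Finsupp.single_apply]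
          simp
        have he0 : 1 ≤ e 0 := by
          rw [he, Finsupp.add_apply, Finsupp.single_eq_same]
          omega
        have := c1 (e 0) he0
        rw [← fin2_eq_single0 _ he1'] at this
        linarith
  -- coefficient condition → decomposition
  have decomp : ((∀ i : ℕ, 1 ≤ i → h.coeff (Finsupp.single 0 i) ≤ 0) ∧
      (∀ j : ℕ, 1 ≤ j → 0 ≤ h.coeff (Finsupp.single 1 j))) →
      (∃ a b c : MvPolynomial (Fin 2) ℝ,
        (∀ d : Fin 2 →₀ ℕ, 0 ≤ b.coeff d) ∧ (∀ d : Fin 2 →₀ ℕ, 0 ≤ c.coeff d) ∧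
        (∀ d ∈ b.support, d 1 = 0) ∧ (∀ d ∈ c.support, d 0 = 0) ∧
        h = X 0 * X 1 * a - b + c) := by
    rintro ⟨c1, c2⟩
    set b : MvPolynomial (Fin 2) ℝ :=
      ∑ e ∈ h.support.filter (fun e => e 1 = 0 ∧ h.coeff e < 0),
        monomial e (-(h.coeff e)) with hb
    set c : MvPolynomial (Fin 2) ℝ :=
      ∑ e ∈ h.support.filter (fun e => e 0 = 0 ∧ 0 < h.coeff e),
        monomial e (h.coeff e) with hc
    have hbcoeff : ∀ d : Fin 2 →₀ ℕ,
        b.coeff d = if d 1 = 0 ∧ h.coeff d < 0 then -(h.coeff d) else 0 := by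
      intro d
      rw [hb, coeff_filter_sum]
      by_cases hcond : d 1 = 0 ∧ h.coeff d < 0
      · rw [if_pos hcond, if_pos
          (Finset.mem_filter.2 ⟨mem_support_iff.2 (ne_of_lt hcond.2), hcond⟩)]
      · rw [if_neg hcond]
        apply if_neg
        intro hmem
        exact hcond (Finset.mem_filter.1 hmem).2
    have hccoeff : ∀ d : Fin 2 →₀ ℕ,
        c.coeff d = if d 0 = 0 ∧ 0 < h.coeff d then h.coeff d else 0 := by
      intro d
      rw [hc, coeff_filter_sum]
      by_cases hcond : d 0 = 0 ∧ 0 < h.coeff d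
      · rw [if_pos hcond, if_pos
          (Finset.mem_filter.2 ⟨mem_support_iff.2 (ne_of_gt hcond.2), hcond⟩)]
      · rw [if_neg hcond]
        apply if_neg
        intro hmem
        exact hcond (Finset.mem_filter.1 hmem).2
    set p : MvPolynomial (Fin 2) ℝ := h + b - c with hp
    have hpkey : ∀ d : Fin 2 →₀ ℕ, p.coeff d ≠ 0 → 1 ≤ d 0 ∧ 1 ≤ d 1 := by
      intro d hdne
      by_contra hcon
      apply hdne
      have hpd : p.coeff d = h.coeff d + b.coeff d - c.coeff d := by
        simp [hp]
      rw [hpd, hbcoeff, hccoeff]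
      have hd01 : d 0 = 0 ∨ d 1 = 0 := by
        by_contra hno
        push_neg at hno
        exact hcon ⟨by omega, by omega⟩
      have hconst : d 0 = 0 → d 1 = 0 →
          h.coeff d + (if d 1 = 0 ∧ h.coeff d < 0 then -(h.coeff d) else 0) -
            (if d 0 = 0 ∧ 0 < h.coeff d then h.coeff d else 0) = 0 := by
        intro hd0 hd1
        rcases lt_trichotomy (h.coeff d) 0 with hlt | heq | hgt
        · rw [if_pos ⟨hd1, hlt⟩, if_neg (by rintro ⟨-, h'⟩; linarith)]
          ring
        · rw [if_neg (by rintro ⟨-, h'⟩; linarith),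
            if_neg (by rintro ⟨-, h'⟩; linarith), heq]
          ring
        · rw [if_neg (by rintro ⟨-, h'⟩; linarith), if_pos ⟨hd0, hgt⟩]
          ring
      rcases hd01 with hd0 | hd1
      · by_cases hd1 : d 1 = 0
        · exact hconst hd0 hd1
        · have hnonneg : 0 ≤ h.coeff d := by
            have := c2 (d 1) (by omega)
            rwa [← fin2_eq_single1 _ hd0] at this
          rw [if_neg (by rintro ⟨h', -⟩; exact hd1 h')]
          rcases eq_or_lt_of_le hnonneg with heq | hgt
          · rw [if_neg (by rintro ⟨-, h'⟩; linarith), ← heq]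
            ring
          · rw [if_pos ⟨hd0, hgt⟩]
            ring
      · by_cases hd0 : d 0 = 0
        · exact hconst hd0 hd1
        · have hnonpos : h.coeff d ≤ 0 := by
            have := c1 (d 0) (by omega)
            rwa [← fin2_eq_single0 _ hd1] at this
          rcases eq_or_lt_of_le hnonpos with heq0 | hlt
          · rw [if_neg (by rintro ⟨-, h'⟩; linarith),
              if_neg (by rintro ⟨h', -⟩; exact hd0 h'), heq0]
            ring
          · rw [if_pos ⟨hd1, hlt⟩, if_neg (by rintro ⟨h', -⟩; exact hd0 h')]
            ring
    -- construct a
    set u : Fin 2 →₀ ℕ := Finsupp.single 0 1 + Finsupp.single 1 1 with hu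
    set a : MvPolynomial (Fin 2) ℝ :=
      ∑ e ∈ p.support, monomial (e - u) (p.coeff e) with ha
    have hXXa : X 0 * X 1 * a = p := by
      have hXX : (X 0 * X 1 : MvPolynomial (Fin 2) ℝ) = monomial u 1 := by
        rw [hu]
        simp [X, monomial_mul]
      rw [hXX, ha, Finset.mul_sum]
      conv_rhs => rw [p.as_sum]
      refine Finset.sum_congr rfl fun e he => ?_
      have hud : u ≤ e := by
        have hk := hpkey e (mem_support_iff.1 he)
        rw [Finsupp.le_def]
        intro i
        fin_cases i <;>
          simp [hu, Finsupp.add_apply, Finsupp.single_apply] <;> omega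
      rw [monomial_mul, one_mul, add_tsub_cancel_of_le hud]
    refine ⟨a, b, c, ?_, ?_, ?_, ?_, ?_⟩
    · intro d
      rw [hbcoeff]
      split
      · next hcond => linarith [hcond.2]
      · exact le_rfl
    · intro d
      rw [hccoeff]
      split
      · next hcond => linarith [hcond.2]
      · exact le_rfl
    · intro d hd
      rw [mem_support_iff, hbcoeff] at hd
      split at hd
      · next hcond => exact hcond.1
      · exact absurd rfl hd
    · intro d hd
      rw [mem_support_iff, hccoeff] at hd
      split at hd
      · next hcond => exact hcond.1
      · exact absurd rfl hd
    · rw [hXXa, hp]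
      ring
  -- decomposition → coefficient condition
  have rev : (∃ a b c : MvPolynomial (Fin 2) ℝ,
        (∀ d : Fin 2 →₀ ℕ, 0 ≤ b.coeff d) ∧ (∀ d : Fin 2 →₀ ℕ, 0 ≤ c.coeff d) ∧
        (∀ d ∈ b.support, d 1 = 0) ∧ (∀ d ∈ c.support, d 0 = 0) ∧
        h = X 0 * X 1 * a - b + c) →
      ((∀ i : ℕ, 1 ≤ i → h.coeff (Finsupp.single 0 i) ≤ 0) ∧
      (∀ j : ℕ, 1 ≤ j → 0 ≤ h.coeff (Finsupp.single 1 j))) := by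
    rintro ⟨a, b, c, hbpos, hcpos, hbsupp, hcsupp, heq⟩
    constructor
    · intro i hi
      have hXa : (X 0 * X 1 * a).coeff (Finsupp.single 0 i) = 0 := by
        have he : (X 0 * X 1 * a : MvPolynomial (Fin 2) ℝ) = X 0 * a * X 1 := by ring
        rw [he, coeff_mul_X', if_neg]
        simp only [Finsupp.mem_support_iff, Finsupp.single_apply, ne_eq, not_not]
        norm_num
      have hcz : c.coeff (Finsupp.single 0 i) = 0 := by
        by_contra hne
        have := hcsupp _ (mem_support_iff.2 hne)
        rw [Finsupp.single_eq_same] at this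
        omega
      have hsum : h.coeff (Finsupp.single 0 i) =
          (X 0 * X 1 * a).coeff (Finsupp.single 0 i) - b.coeff (Finsupp.single 0 i)
            + c.coeff (Finsupp.single 0 i) := by
        rw [heq]
        simp
      rw [hsum, hXa, hcz]
      have := hbpos (Finsupp.single 0 i)
      linarith
    · intro j hj
      have hXa : (X 0 * X 1 * a).coeff (Finsupp.single 1 j) = 0 := by
        have he : (X 0 * X 1 * a : MvPolynomial (Fin 2) ℝ) = X 1 * a * X 0 := by ring
        rw [he, coeff_mul_X', if_neg]
        simp only [Finsupp.mem_support_iff, Finsupp.single_apply, ne_eq, not_not]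
        norm_num
      have hbz : b.coeff (Finsupp.single 1 j) = 0 := by
        by_contra hne
        have := hbsupp _ (mem_support_iff.2 hne)
        rw [Finsupp.single_eq_same] at this
        omega
      have hsum : h.coeff (Finsupp.single 1 j) =
          (X 0 * X 1 * a).coeff (Finsupp.single 1 j) - b.coeff (Finsupp.single 1 j)
            + c.coeff (Finsupp.single 1 j) := by
        rw [heq]
        simp
      rw [hsum, hXa, hbz]
      have := hcpos (Finsupp.single 1 j)
      linarith
  exact ⟨key.trans ⟨decomp, rev⟩, key⟩
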